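/- Let X₁ = μ₁ + ε₁ and X₂ = μ₂ + ε₂ where μ₁ > μ₂ and ε₁, ε₂ are i.i.d. random variables whose common density f is symmetric about 0 and unimodal (increasing on (-∞,0], decreasing on [0,∞)). Then the density g of X = X₁ - X₂ is symmetric about μ₁ - μ₂ and unimodal, and consequently for every Δ > 0, g(Δ) > g(-Δ), i.e., conditional on |X₁ - X₂| = Δ, the event X₁ > X₂ is strictly more likely than X₁ < X₂. -/

import Mathlib

open MeasureTheory Set

/-- If `f` is a symmetric, single-peaked (unimodal) probability
density of the i.i.d. noises `ε₁, ε₂`, and `X₁ = μ₁ + ε₁`, `X₂ = μ₂ + ε₂` with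
`μ₁ > μ₂`, then the density `g` of `X₁ - X₂` (the convolution of `f` with its
reflection, shifted by `μ₁ - μ₂`) is symmetric about `μ₁ - μ₂`, unimodal, and
satisfies `g Δ > g (-Δ)` for all `Δ > 0`. -/
theorem stmt0
    (f : ℝ → ℝ) (μ₁ μ₂ : ℝ) (g : ℝ → ℝ)
    (hμ : μ₂ < μ₁)
    (hf_nonneg : ∀ x, 0 ≤ f x)
    (hf_int : Integrable f)
    (hf_mass : ∫ x, f x = 1)
    (hf_symm : ∀ x, f (-x) = f x)
    (hf_mono : StrictMonoOn f (Iic (0 : ℝ)))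
    (hf_anti : StrictAntiOn f (Ici (0 : ℝ)))
    (hg : ∀ δ, g δ = ∫ ε, f ε * f (ε - δ + (μ₁ - μ₂))) :
    (∀ δ, g ((μ₁ - μ₂) + δ) = g ((μ₁ - μ₂) - δ)) ∧
    StrictMonoOn g (Iic (μ₁ - μ₂)) ∧
    StrictAntiOn g (Ici (μ₁ - μ₂)) ∧
    (∀ Δ : ℝ, 0 < Δ → g Δ > g (-Δ)) := by
  set m : ℝ := μ₁ - μ₂ with hm_def
  have hm : 0 < m := sub_pos.mpr hμ
  -- f equals f of the absolute value
  have habs : ∀ x : ℝ, f x = f |x| := by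
    intro x
    rcases abs_cases x with ⟨h, _⟩ | ⟨h, _⟩
    · rw [h]
    · rw [h, hf_symm]
  -- f is bounded by f 0
  have hbound : ∀ x : ℝ, f x ≤ f 0 := by
    intro x
    rcases lt_trichotomy x 0 with h | h | h
    · exact (hf_mono h.le (le_refl (0 : ℝ)) h).le
    · rw [h]
    · exact (hf_anti (le_refl (0 : ℝ)) h.le h).le
  -- the autocorrelation function
  set h : ℝ → ℝ := fun t => ∫ ε, f ε * f (ε - t) with hh_def
  have hg' : ∀ δ, g δ = h (δ - m) := by
    intro δ
    rw [hg δ, hh_def]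
    simp only
    congr 1
    funext ε
    congr 1
    congr 1
    ring
  -- integrability of all shifted products
  have hInt : ∀ t : ℝ, Integrable (fun ε => f ε * f (ε - t)) := by
    intro t
    have hmeas : AEStronglyMeasurable (fun ε : ℝ => f (ε - t)) volume :=
      (hf_int.comp_sub_right t).aestronglyMeasurable
    have hb : ∃ C, ∀ x : ℝ, ‖f (x - t)‖ ≤ C := by
      refine ⟨f 0, fun x => ?_⟩
      rw [Real.norm_eq_abs, abs_of_nonneg (hf_nonneg _)]
      exact hbound _
    have := Integrable.bdd_mul hf_int hmeas (ae_of_all _ hb.choose_spec)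
    simpa only [mul_comm] using this
  -- symmetry of h
  have hsym : ∀ t : ℝ, h (-t) = h t := by
    intro t
    have e1 : h (-t) = ∫ ε, (fun x => f x * f (x + t)) ε := by
      simp only [hh_def, sub_neg_eq_add]
    calc h (-t) = ∫ ε, (fun x => f x * f (x + t)) ε := e1
      _ = ∫ ε, (fun x => f x * f (x + t)) (-ε) :=
          (integral_neg_eq_self (fun x => f x * f (x + t)) volume).symm
      _ = h t := by
          simp only [hh_def]
          congr 1
          funext ε
          rw [show -ε + t = -(ε - t) by ring, hf_symm, hf_symm]
  -- key strict monotonicity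
  have key : ∀ t1 t2 : ℝ, 0 ≤ t1 → t1 < t2 → h t2 < h t1 := by
    intro t1 t2 ht1 hlt
    set c : ℝ := (t1 + t2) / 2 with hc_def
    set s : ℝ := (t2 - t1) / 2 with hs_def
    have hc : 0 < c := by rw [hc_def]; linarith
    have hs : 0 < s := by rw [hs_def]; linarith
    -- translate each integral by c
    have e2 : ∀ t : ℝ, h t = ∫ x, f (x + c) * f (x + c - t) := by
      intro t
      rw [hh_def]
      exact (integral_add_right_eq_self (fun y => f y * f (y - t)) c).symm
    have ect2 : ∀ x : ℝ, x + c - t2 = x - s := by intro x; rw [hc_def, hs_def]; ring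
    have ect1 : ∀ x : ℝ, x + c - t1 = x + s := by intro x; rw [hc_def, hs_def]; ring
    have et2 : h t2 = ∫ x, f (x + c) * f (x - s) := by
      rw [e2 t2]; congr 1; funext x; rw [ect2 x]
    have et1 : h t1 = ∫ x, f (x + c) * f (x + s) := by
      rw [e2 t1]; congr 1; funext x; rw [ect1 x]
    have I1 : Integrable (fun x => f (x + c) * f (x - s)) := by
      have := (hInt t2).comp_add_right c
      simp only [ect2] at this
      exact this
    have I2 : Integrable (fun x => f (x + c) * f (x + s)) := by
      have := (hInt t1).comp_add_right c
      simp only [ect1] at this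
      exact this
    set F : ℝ → ℝ := fun x => f (x + c) * f (x - s) - f (x + c) * f (x + s) with hF_def
    have IF : Integrable F := I1.sub I2
    have IFneg : Integrable (fun x => F (-x)) := IF.comp_neg
    have hdiff : h t2 - h t1 = ∫ x, F x := by
      rw [et2, et1, ← integral_sub I1 I2]
    -- split the integral at 0
    have hsplit : (∫ x in Iic (0:ℝ), F x) + (∫ x in Ioi (0:ℝ), F x) = ∫ x, F x := by
      rw [show Ioi (0:ℝ) = (Iic (0:ℝ))ᶜ by rw [compl_Iic]]
      exact integral_add_compl measurableSet_Iic IF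
    have hrefl : (∫ x in Iic (0:ℝ), F x) = ∫ x in Ioi (0:ℝ), F (-x) := by
      have := integral_comp_neg_Ioi (0:ℝ) F
      rw [neg_zero] at this
      exact this.symm
    set φ : ℝ → ℝ := fun x => (f (x - c) - f (x + c)) * (f (x - s) - f (x + s)) with hφ_def
    have hFneg : ∀ x, F (-x) + F x = -φ x := by
      intro x
      simp only [hF_def, hφ_def]
      rw [show -x + c = -(x - c) by ring, show -x - s = -(x + s) by ring,
        show -x + s = -(x - s) by ring, hf_symm, hf_symm, hf_symm]
      ring
    -- φ is positive on Ioi 0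
    have hφpos : ∀ x : ℝ, x ∈ Ioi (0:ℝ) → 0 < φ x := by
      intro x hx
      have hx0 : (0:ℝ) < x := hx
      have fac : ∀ a : ℝ, 0 < a → f (x + a) < f (x - a) := by
        intro a ha
        have h1 : |x - a| < x + a := abs_lt.mpr ⟨by linarith, by linarith⟩
        have := hf_anti (abs_nonneg (x - a)) (by positivity : (0:ℝ) ≤ x + a) h1
        rwa [← habs] at this
      exact mul_pos (sub_pos.mpr (fac c hc)) (sub_pos.mpr (fac s hs))
    -- φ is integrable
    have Iφ : Integrable φ := by
      have IA := (hInt (s - c)).comp_sub_right c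
      have IB := (hInt (-s - c)).comp_sub_right c
      have IC := (hInt (s + c)).comp_add_right c
      have ID := (hInt (c - s)).comp_add_right c
      have hφeq : φ = fun x =>
          (f (x - c) * f (x - c - (s - c)) - f (x - c) * f (x - c - (-s - c)))
            - f (x + c) * f (x + c - (s + c)) + f (x + c) * f (x + c - (c - s)) := by
        funext x
        simp only [hφ_def]
        rw [show x - c - (s - c) = x - s by ring, show x - c - (-s - c) = x + s by ring,
          show x + c - (s + c) = x - s by ring, show x + c - (c - s) = x + s by ring]
        ring
      rw [hφeq]
      exact ((IA.sub IB).sub IC).add ID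
    -- the set integral of φ is positive
    have hφint_pos : 0 < ∫ x in Ioi (0:ℝ), φ x := by
      have hnn : 0 ≤ᵐ[volume.restrict (Ioi (0:ℝ))] φ :=
        (ae_restrict_iff' measurableSet_Ioi).2 (ae_of_all _ fun x hx => (hφpos x hx).le)
      rw [setIntegral_pos_iff_support_of_nonneg_ae hnn Iφ.integrableOn]
      refine lt_of_lt_of_le ?_ (measure_mono (fun x hx => ⟨ne_of_gt (hφpos x hx), hx⟩))
      rw [Real.volume_Ioi]
      exact ENNReal.zero_lt_top
    -- combine
    have hcomb : h t2 - h t1 = -∫ x in Ioi (0:ℝ), φ x := by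
      rw [hdiff, ← hsplit, hrefl,
        ← integral_add IFneg.integrableOn IF.integrableOn]
      rw [show (fun x => F (-x) + F x) = fun x => -φ x from funext hFneg]
      rw [integral_neg]
    linarith
  -- assemble the four claims
  refine ⟨?_, ?_, ?_, ?_⟩
  · intro δ
    rw [hg' (m + δ), hg' (m - δ)]
    rw [show m + δ - m = δ by ring, show m - δ - m = -δ by ring, hsym δ]
  · intro a ha b hb hab
    rw [hg' a, hg' b]
    rw [show a - m = -(m - a) by ring, show b - m = -(m - b) by ring, hsym, hsym]
    exact key (m - b) (m - a) (by simp only [mem_Iic] at hb; linarith) (by linarith)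
  · intro a ha b hb hab
    rw [hg' a, hg' b]
    exact key (a - m) (b - m) (by simp only [mem_Ici] at ha; linarith) (by linarith)
  · intro Δ hΔ
    rw [hg' Δ, hg' (-Δ)]
    rw [show -Δ - m = -(Δ + m) by ring, hsym]
    rcases le_or_gt 0 (Δ - m) with hcase | hcase
    · exact key (Δ - m) (Δ + m) hcase (by linarith)
    · rw [show Δ - m = -(m - Δ) by ring, hsym]
      exact key (m - Δ) (Δ + m) (by linarith) (by linarith)
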